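/- Let $A, E \in \mathbb{R}^{n\times n}$, $\alpha, \beta \in \mathbb{C}$, and $v = x + iy$ with $x,y \in \mathbb{R}^n$ satisfy $\beta A v = \alpha E v$. Let $c,s \in \mathbb{R}$ with $c^2+s^2=1$ and set $\tilde{x} = cx - sy$, $\tilde{y} = sx + cy$. Suppose $\tilde{x}, \tilde{y} \neq 0$, and let $v_1 = \tilde{x}/\|\tilde{x}\|$, $v_2 = \tilde{y}/\|\tilde{y}\|$, $\delta = \|\tilde{x}\|/\|\tilde{y}\|$. Then $A[v_1\ v_2]D_\delta(\beta) = E[v_1\ v_2]D_\delta(\alpha)$. -/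

import Mathlib

open Matrix

/-- The real `2 × 2` matrix `D_δ(λ)`. -/
noncomputable def Ddelta (δ : ℝ) (lam : ℂ) : Matrix (Fin 2) (Fin 2) ℝ :=
  !![lam.re, δ * lam.im; -δ⁻¹ * lam.im, lam.re]

/-- after a Jacobi rotation and normalization of the real and imaginary
parts of the eigenvector, `A [v₁ v₂] D_δ(β) = E [v₁ v₂] D_δ(α)`. -/
theorem stmt8 {n : ℕ} (A E : Matrix (Fin n) (Fin n) ℝ) (α β : ℂ)
    (x y : Fin n → ℝ) (v : Fin n → ℂ)
    (hv : v = fun i => (x i : ℂ) + (y i : ℂ) * Complex.I)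
    (heig : β • (A.map Complex.ofReal).mulVec v = α • (E.map Complex.ofReal).mulVec v)
    (c s : ℝ) (hcs : c ^ 2 + s ^ 2 = 1)
    (tx ty : Fin n → ℝ) (htx : tx = c • x - s • y) (hty : ty = s • x + c • y)
    (htx0 : tx ≠ 0) (hty0 : ty ≠ 0)
    (v1 v2 : Fin n → ℝ)
    (hv1 : v1 = (Real.sqrt (tx ⬝ᵥ tx))⁻¹ • tx)
    (hv2 : v2 = (Real.sqrt (ty ⬝ᵥ ty))⁻¹ • ty)
    (δ : ℝ) (hδ : δ = Real.sqrt (tx ⬝ᵥ tx) / Real.sqrt (ty ⬝ᵥ ty))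
    (V : Matrix (Fin n) (Fin 2) ℝ) (hV : V = Matrix.of fun i j => ![v1 i, v2 i] j) :
    A * V * Ddelta δ β = E * V * Ddelta δ α := by
  have hnn : ∀ w : Fin n → ℝ, 0 ≤ w ⬝ᵥ w := fun w => Finset.sum_nonneg fun i _ => mul_self_nonneg (w i)
  have ha0 : (0:ℝ) < Real.sqrt (tx ⬝ᵥ tx) := Real.sqrt_pos.2 <|
    lt_of_le_of_ne (hnn tx) (fun h => htx0 ((dotProduct_self_eq_zero).1 h.symm))
  have hb0 : (0:ℝ) < Real.sqrt (ty ⬝ᵥ ty) := Real.sqrt_pos.2 <|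
    lt_of_le_of_ne (hnn ty) (fun h => hty0 ((dotProduct_self_eq_zero).1 h.symm))
  set a := Real.sqrt (tx ⬝ᵥ tx)
  set b := Real.sqrt (ty ⬝ᵥ ty)
  have hre : ∀ i, β.re * (A.mulVec x i) - β.im * (A.mulVec y i)
      = α.re * (E.mulVec x i) - α.im * (E.mulVec y i) := by
    intro i
    have h := congrFun heig i
    simp only [Pi.smul_apply, Matrix.mulVec, dotProduct, Matrix.map_apply, hv, smul_eq_mul,
      Complex.ext_iff, Complex.mul_re, Complex.mul_im, Complex.re_sum, Complex.im_sum,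
      Complex.add_re, Complex.add_im, Complex.mul_I_re, Complex.mul_I_im, Complex.ofReal_re,
      Complex.ofReal_im, Complex.I_re, Complex.I_im, mul_zero, mul_one, zero_mul, add_zero,
      zero_add, sub_zero, mul_comm] at h
    simp only [Matrix.mulVec, dotProduct]
    ring_nf at h ⊢
    exact h.1
  have him : ∀ i, β.re * (A.mulVec y i) + β.im * (A.mulVec x i)
      = α.re * (E.mulVec y i) + α.im * (E.mulVec x i) := by
    intro i
    have h := congrFun heig i
    simp only [Pi.smul_apply, Matrix.mulVec, dotProduct, Matrix.map_apply, hv, smul_eq_mul,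
      Complex.ext_iff, Complex.mul_re, Complex.mul_im, Complex.re_sum, Complex.im_sum,
      Complex.add_re, Complex.add_im, Complex.mul_I_re, Complex.mul_I_im, Complex.ofReal_re,
      Complex.ofReal_im, Complex.I_re, Complex.I_im, mul_zero, mul_one, zero_mul, add_zero,
      zero_add, sub_zero, mul_comm] at h
    simp only [Matrix.mulVec, dotProduct]
    ring_nf at h ⊢
    exact h.2
  have hAtx : ∀ (M : Matrix (Fin n) (Fin n) ℝ) i, M.mulVec tx i = c * M.mulVec x i - s * M.mulVec y i := by
    intro M i
    rw [htx]
    simp [Matrix.mulVec_sub, Matrix.mulVec_smul]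
  have hAty : ∀ (M : Matrix (Fin n) (Fin n) ℝ) i, M.mulVec ty i = s * M.mulVec x i + c * M.mulVec y i := by
    intro M i
    rw [hty]
    simp [Matrix.mulVec_add, Matrix.mulVec_smul]
  have keyR : ∀ i, β.re * (A.mulVec tx i) - β.im * (A.mulVec ty i)
      = α.re * (E.mulVec tx i) - α.im * (E.mulVec ty i) := by
    intro i
    simp only [hAtx, hAty]
    linear_combination c * hre i - s * him i
  have keyI : ∀ i, β.re * (A.mulVec ty i) + β.im * (A.mulVec tx i)
      = α.re * (E.mulVec ty i) + α.im * (E.mulVec tx i) := by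
    intro i
    simp only [hAtx, hAty]
    linear_combination s * hre i + c * him i
  have esum : ∀ (M : Matrix (Fin n) (Fin n) ℝ) (w : Fin n → ℝ) (r : ℝ) i,
      ∑ l, M i l * (r * w l) = r * M.mulVec w i := by
    intro M w r i
    simp [Matrix.mulVec, dotProduct, Finset.mul_sum, mul_comm, mul_left_comm]
  ext i j
  fin_cases j <;>
    simp only [Matrix.mul_apply, hV, Matrix.of_apply, hv1, hv2, Pi.smul_apply, smul_eq_mul,
      Ddelta, hδ, Fin.sum_univ_two, Fin.isValue, Matrix.cons_val', Matrix.cons_val_zero,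
      Matrix.cons_val_one, Matrix.head_cons, Matrix.head_fin_const, Matrix.empty_val',
      Matrix.cons_val_fin_one, Matrix.of_apply, esum, Fin.zero_eta, Fin.mk_one]
  · field_simp [ha0.ne', hb0.ne']
    linear_combination keyR i
  · field_simp [ha0.ne', hb0.ne']
    linear_combination keyI i
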